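/- Let p be a prime, let m ≥ 1, w, r, A be integers with 0 ≤ A ≤ p−1 and A ≤ r ≤ m(p−1). Then Σ_{i=0}^{p−1−A} Δ_p(m, r−A, w−i) ≥ Δ_p(m+1, r, w), with equality when A = 0, i.e. Σ_{i=0}^{p−1} Δ_p(m, r, w−i) = Δ_p(m+1, r, w). -/

import Mathlib

/-- The `p`-nomial coefficient `C(m,s)_p`: the coefficient of `x^s` in
`(1 + x + ⋯ + x^{p−1})^m ∈ ℤ[x]`, extended by `0` for `s < 0`. -/
noncomputable def pnomial (p m : ℕ) (s : ℤ) : ℤ :=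
  if 0 ≤ s then
    ((∑ i ∈ Finset.range p, (Polynomial.X : Polynomial ℤ) ^ i) ^ m).coeff s.toNat
  else 0

/-- `C(m,>s)_p = ∑_{i>s} C(m,i)_p`.  Since `C(m,i)_p = 0` for `i > m(p−1)`,
the sum may be truncated at `m(p−1)`. -/
noncomputable def pnomialGT (p m : ℕ) (s : ℤ) : ℤ :=
  ∑ i ∈ Finset.range (m * (p - 1) + 1), if s < (i : ℤ) then pnomial p m i else 0

/-- `Δ_p(m,r,w)`: writing `r = α(p−1)+β` with `0 ≤ β ≤ p−2` (so `α = r/(p−1)`,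
`β = r % (p−1)`), this is `C(m−α,>w)_p` if `β = 0`, and
`C(m−α,>w)_p − ∑_{j=p−β}^{p−1} C(m−α−1,>w−j)_p` otherwise. -/
noncomputable def Δp (p m r : ℕ) (w : ℤ) : ℤ :=
  if r % (p - 1) = 0 then pnomialGT p (m - r / (p - 1)) w
  else pnomialGT p (m - r / (p - 1)) w -
    ∑ j ∈ Finset.Icc (p - r % (p - 1)) (p - 1),
      pnomialGT p (m - r / (p - 1) - 1) (w - (j : ℤ))

/-- The Manhattan weight `|v|_M = ∑ i, val(v_i)` of a vector `v ∈ 𝔽_p^m`. -/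
def manhattanWeight {p m : ℕ} (v : Fin m → ZMod p) : ℕ := ∑ i, (v i).val

lemma pnomial_neg (p m : ℕ) {s : ℤ} (hs : s < 0) : pnomial p m s = 0 := by
  simp [pnomial, not_le.2 hs]

lemma pnomial_zero (p : ℕ) (s : ℤ) : pnomial p 0 s = if s = 0 then 1 else 0 := by
  unfold pnomial
  rcases le_or_gt 0 s with h | h
  · rw [if_pos h, pow_zero, Polynomial.coeff_one]
    congr 1
    simp only [eq_iff_iff]
    omega
  · rw [if_neg (not_le.2 h), if_neg (by omega)]

lemma pnomial_succ (p n : ℕ) (s : ℤ) :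
    pnomial p (n+1) s = ∑ i ∈ Finset.range p, pnomial p n (s - (i : ℤ)) := by
  rcases le_or_gt 0 s with h | h
  · unfold pnomial
    rw [if_pos h, pow_succ, Finset.mul_sum]
    rw [Polynomial.finset_sum_coeff]
    apply Finset.sum_congr rfl
    intro i hi
    rw [Polynomial.coeff_mul_X_pow']
    rcases le_or_gt (i : ℤ) s with h2 | h2
    · rw [if_pos (by omega), if_pos (by omega)]
      congr 1
      omega
    · rw [if_neg (by omega), if_neg (by omega)]
  · rw [pnomial_neg _ _ h]
    symm
    apply Finset.sum_eq_zero
    intro i _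
    exact pnomial_neg _ _ (by omega)

lemma pnomial_nonneg (p m : ℕ) (s : ℤ) : 0 ≤ pnomial p m s := by
  induction m generalizing s with
  | zero => rw [pnomial_zero]; split <;> norm_num
  | succ n ih => rw [pnomial_succ]; exact Finset.sum_nonneg fun i _ => ih _

lemma pnomial_eq_zero_of_gt (p m : ℕ) {s : ℤ} (hs : (m * (p-1) : ℕ) < s) :
    pnomial p m s = 0 := by
  unfold pnomial
  rw [if_pos (by omega)]
  apply Polynomial.coeff_eq_zero_of_natDegree_lt
  calc ((∑ i ∈ Finset.range p, (Polynomial.X : Polynomial ℤ) ^ i) ^ m).natDegree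
      ≤ m * (∑ i ∈ Finset.range p, (Polynomial.X : Polynomial ℤ) ^ i).natDegree :=
        Polynomial.natDegree_pow_le
    _ ≤ m * (p - 1) := by
        apply Nat.mul_le_mul_left
        apply Polynomial.natDegree_sum_le_of_forall_le
        intro i hi
        simp only [Polynomial.natDegree_X_pow]
        simp only [Finset.mem_range] at hi
        omega
    _ < s.toNat := by omega

lemma pnomialGT_trunc (p m N : ℕ) (hN : m * (p-1) + 1 ≤ N) (w : ℤ) :
    pnomialGT p m w = ∑ i ∈ Finset.range N, if w < (i : ℤ) then pnomial p m i else 0 := by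
  unfold pnomialGT
  apply Finset.sum_subset
  · exact Finset.range_subset_range.2 hN
  · intro i _ hi
    simp only [Finset.mem_range, not_lt] at hi
    rw [pnomial_eq_zero_of_gt p m (by push_cast; omega)]
    simp

lemma pnomialGT_nonneg (p m : ℕ) (w : ℤ) : 0 ≤ pnomialGT p m w := by
  apply Finset.sum_nonneg
  intro i _
  split
  · exact pnomial_nonneg _ _ _
  · exact le_refl _

lemma pnomialGT_succ (p : ℕ) (hp : 1 ≤ p) (n : ℕ) (w : ℤ) :
    pnomialGT p (n+1) w = ∑ i ∈ Finset.range p, pnomialGT p n (w - (i : ℤ)) := by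
  obtain ⟨N, hN⟩ : ∃ N, N = (n+1) * (p-1) + p := ⟨_, rfl⟩
  have hexp : (n+1)*(p-1) = n*(p-1) + (p-1) := by ring
  rw [pnomialGT_trunc p (n+1) N (by omega)]
  have step : ∀ s ∈ Finset.range N,
      (if w < (s : ℤ) then pnomial p (n+1) s else 0)
      = ∑ i ∈ Finset.range p, (if w < (s:ℤ) then pnomial p n ((s:ℤ) - i) else 0) := by
    intro s _
    split
    · rw [pnomial_succ]
    · simp
  rw [Finset.sum_congr rfl step, Finset.sum_comm]
  apply Finset.sum_congr rfl
  intro i hi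
  simp only [Finset.mem_range] at hi
  -- goal: ∑ s ∈ range N, (if w < s then pnomial p n (s - i) else 0) = pnomialGT p n (w - i)
  rw [pnomialGT_trunc p n (N - i) (by omega) (w - (i:ℤ))]
  rw [Finset.range_eq_Ico, ← Finset.sum_Ico_consecutive _ (Nat.zero_le i) (by omega : i ≤ N)]
  have h0 : ∑ s ∈ Finset.Ico 0 i, (if w < (s:ℤ) then pnomial p n ((s:ℤ) - i) else 0) = 0 := by
    apply Finset.sum_eq_zero
    intro s hs
    simp only [Finset.mem_Ico] at hs
    rw [pnomial_neg p n (by omega)]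
    simp
  rw [h0, zero_add, Finset.sum_Ico_eq_sum_range]
  apply Finset.sum_congr (by rw [Finset.range_eq_Ico]) 
  intro t _
  have : ((i + t : ℕ) : ℤ) - (i:ℤ) = (t : ℤ) := by push_cast; ring
  rw [this]
  congr 1
  simp only [eq_iff_iff]
  push_cast
  constructor <;> intro <;> omega

/-- The key single-step expansion of `Δp` as a sum of `pnomialGT`s. -/
lemma Δp_eq_sum (p : ℕ) (hp : 2 ≤ p) (m r : ℕ) (w : ℤ) (h : r / (p-1) + 1 ≤ m) :
    Δp p m r w = ∑ j ∈ Finset.range (p - r % (p-1)),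
      pnomialGT p (m - r / (p-1) - 1) (w - (j : ℤ)) := by
  unfold Δp
  by_cases hβ0 : r % (p-1) = 0
  · rw [if_pos hβ0, hβ0, Nat.sub_zero]
    rw [show m - r / (p-1) = (m - r / (p-1) - 1) + 1 from by omega]
    exact pnomialGT_succ p (by omega) _ w
  · rw [if_neg hβ0]
    have hβlt : r % (p-1) < p - 1 := Nat.mod_lt _ (by omega)
    have h1 : pnomialGT p (m - r / (p-1)) w
        = ∑ j ∈ Finset.range p, pnomialGT p (m - r / (p-1) - 1) (w - (j : ℤ)) := by
      rw [show m - r / (p-1) = (m - r / (p-1) - 1) + 1 from by omega]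
      exact pnomialGT_succ p (by omega) _ w
    rw [h1]
    rw [Finset.range_eq_Ico,
      ← Finset.sum_Ico_consecutive _ (Nat.zero_le (p - r % (p-1))) (by omega : p - r % (p-1) ≤ p)]
    have h2 : Finset.Ico (p - r % (p-1)) p = Finset.Icc (p - r % (p-1)) (p - 1) := by
      rw [← Finset.Ico_add_one_right_eq_Icc]
      congr 1
      omega
    rw [← h2, ← Finset.range_eq_Ico]
    ring

/-- Rectangle comparison lemma. -/
lemma rect_le (f : ℕ → ℤ) (hf : ∀ s, 0 ≤ f s) (a b a' b' : ℕ)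
    (hsum : a + b = a' + b') (hb : b ≤ b') (hba : b ≤ a') :
    ∑ i ∈ Finset.range (a+1), ∑ j ∈ Finset.range (b+1), f (i+j)
      ≤ ∑ i ∈ Finset.range (a'+1), ∑ j ∈ Finset.range (b'+1), f (i+j) := by
  have ha : a' ≤ a := by omega
  rw [show a+1 = (a'+1) + (a - a') from by omega, Finset.sum_range_add]
  have hrhs : ∀ i : ℕ, ∑ j ∈ Finset.range (b'+1), f (i+j)
      = ∑ j ∈ Finset.range (b+1), f (i+j) + ∑ k ∈ Finset.range (b'-b), f (i + (b+1+k)) := by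
    intro i
    rw [show b'+1 = (b+1) + (b' - b) from by omega, Finset.sum_range_add]
  simp only [hrhs]
  rw [Finset.sum_add_distrib]
  apply add_le_add le_rfl
  rw [show a - a' = b' - b from by omega]
  conv_rhs => rw [Finset.sum_comm]
  apply Finset.sum_le_sum
  intro k _
  calc ∑ j ∈ Finset.range (b+1), f (a' + 1 + k + j)
      = ∑ i ∈ Finset.Ico (a'-b) (a'+1), f (i + (b + 1 + k)) := by
        rw [Finset.sum_Ico_eq_sum_range, show a'+1-(a'-b) = b+1 from by omega]
        apply Finset.sum_congr rfl
        intro j _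
        congr 1
        omega
    _ ≤ ∑ i ∈ Finset.range (a'+1), f (i + (b + 1 + k)) := by
        rw [Finset.range_eq_Ico]
        apply Finset.sum_le_sum_of_subset_of_nonneg
        · exact Finset.Ico_subset_Ico (Nat.zero_le _) le_rfl
        · intro i _ _
          exact hf _


/-- Rectangle comparison, in the form used below. -/
lemma rect_le' (g : ℤ → ℤ) (hg : ∀ s, 0 ≤ g s) (w : ℤ) (X Y X' Y' : ℕ)
    (hX : 1 ≤ X) (hY : 1 ≤ Y) (hX' : 1 ≤ X') (hY' : 1 ≤ Y')
    (hsum : X + Y = X' + Y') (hYY' : Y ≤ Y') (hYX' : Y ≤ X') :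
    ∑ i ∈ Finset.range X, ∑ j ∈ Finset.range Y, g (w - i - j)
      ≤ ∑ i ∈ Finset.range X', ∑ j ∈ Finset.range Y', g (w - i - j) := by
  have key := rect_le (fun s => g (w - s)) (fun s => hg _)
    (X-1) (Y-1) (X'-1) (Y'-1) (by omega) (by omega) (by omega)
  rw [show X-1+1 = X from by omega, show Y-1+1 = Y from by omega,
    show X'-1+1 = X' from by omega, show Y'-1+1 = Y' from by omega] at key
  simp only [Nat.cast_add, ← sub_sub] at key
  exact key

/-- For `0 ≤ A ≤ p−1` and `A ≤ r ≤ m(p−1)`,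
`∑_{i=0}^{p−1−A} Δ_p(m, r−A, w−i) ≥ Δ_p(m+1, r, w)`, with equality when
`A = 0`, i.e. `∑_{i=0}^{p−1} Δ_p(m, r, w−i) = Δ_p(m+1, r, w)`. -/
theorem Δp_technical_lemma (p : ℕ) (hp : p.Prime) (m : ℕ) (hm : 1 ≤ m)
    (w : ℤ) (r A : ℕ) (hA : A ≤ p - 1) (hAr : A ≤ r) (hr : r ≤ m * (p - 1)) :
    (Δp p (m + 1) r w ≤ ∑ i ∈ Finset.range (p - A), Δp p m (r - A) (w - (i : ℤ)))
    ∧ (∑ i ∈ Finset.range p, Δp p m r (w - (i : ℤ)) = Δp p (m + 1) r w) := by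
  have hp2 : 2 ≤ p := hp.two_le
  have hβlt : r % (p-1) < p - 1 := Nat.mod_lt _ (by omega)
  have hrdecomp : r % (p-1) + (p-1) * (r / (p-1)) = r := Nat.mod_add_div r (p-1)
  have hαm : r / (p-1) ≤ m := by
    have h1 := Nat.div_le_div_right (c := p-1) hr
    rwa [Nat.mul_div_cancel _ (by omega : 0 < p - 1)] at h1
  have hα1 : r % (p-1) ≠ 0 → r / (p-1) + 1 ≤ m := by
    intro hβ0
    rcases Nat.lt_or_ge (r / (p-1)) m with h | h
    · omega
    · exfalso
      have h2 : r / (p-1) = m := le_antisymm hαm h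
      rw [h2] at hrdecomp
      have h3 : (p-1) * m = m * (p-1) := Nat.mul_comm _ _
      omega
  have part2 : ∑ i ∈ Finset.range p, Δp p m r (w - (i : ℤ)) = Δp p (m + 1) r w := by
    by_cases hβ0 : r % (p-1) = 0
    · simp only [Δp, if_pos hβ0]
      rw [show m + 1 - r / (p-1) = (m - r / (p-1)) + 1 from by omega]
      rw [pnomialGT_succ p (by omega) _ w]
    · rw [Δp_eq_sum p hp2 (m+1) r w (by omega)]
      rw [Finset.sum_congr rfl (fun i (_ : i ∈ Finset.range p) => Δp_eq_sum p hp2 m r (w - i) (hα1 hβ0))]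
      rw [show m + 1 - r/(p-1) - 1 = (m - r/(p-1) - 1) + 1 from by omega]
      rw [Finset.sum_congr rfl (fun j (_ : j ∈ Finset.range (p - r % (p-1))) => pnomialGT_succ p (by omega)
        (m - r/(p-1) - 1) (w - j))]
      rw [Finset.sum_comm]
      apply Finset.sum_congr rfl
      intro i _
      apply Finset.sum_congr rfl
      intro j _
      congr 1
      ring
  refine ⟨?_, part2⟩
  rcases Nat.eq_zero_or_pos A with rfl | hApos
  · simpa using le_of_eq part2.symm
  rw [← part2]
  by_cases hcase : A ≤ r % (p-1)
  · -- A ≤ β, hence β ≠ 0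
    have hβ0 : r % (p-1) ≠ 0 := by omega
    have hα1' := hα1 hβ0
    have key : r - A = (r % (p-1) - A) + (p-1) * (r / (p-1)) := by omega
    have hd : (r - A) / (p-1) = r / (p-1) := by
      rw [key, Nat.add_mul_div_left _ _ (by omega : 0 < p - 1),
        Nat.div_eq_of_lt (by omega)]
      omega
    have hmod : (r - A) % (p-1) = r % (p-1) - A := by
      rw [key, Nat.add_mul_mod_self_left, Nat.mod_eq_of_lt (by omega)]
    rw [Finset.sum_congr rfl (fun i (_ : i ∈ Finset.range p) => Δp_eq_sum p hp2 m r (w - i) hα1')]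
    rw [Finset.sum_congr rfl (fun i (_ : i ∈ Finset.range (p - A)) => Δp_eq_sum p hp2 m (r-A) (w - i)
      (by rw [hd]; exact hα1'))]
    rw [hd, hmod]
    exact rect_le' _ (pnomialGT_nonneg p _) w
      p (p - r % (p-1)) (p - A) (p - (r % (p-1) - A))
      (by omega) (by omega) (by omega) (by omega) (by omega) (by omega) (by omega)
  · -- A > β
    push_neg at hcase
    obtain ⟨α₁, hα₁⟩ : ∃ t, r / (p-1) = t + 1 := by
      rcases Nat.eq_zero_or_pos (r / (p-1)) with h | h
      · exfalso
        rw [h, Nat.mul_zero] at hrdecomp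
        omega
      · exact ⟨r / (p-1) - 1, by omega⟩
    rw [hα₁] at hrdecomp hαm
    have hexp : (p-1) * (α₁ + 1) = (p-1) * α₁ + (p-1) := by ring
    have key : r - A = ((p-1) + r % (p-1) - A) + (p-1) * α₁ := by omega
    have hd : (r - A) / (p-1) = α₁ := by
      rw [key, Nat.add_mul_div_left _ _ (by omega : 0 < p - 1),
        Nat.div_eq_of_lt (by omega)]
      omega
    have hmod : (r - A) % (p-1) = (p-1) + r % (p-1) - A := by
      rw [key, Nat.add_mul_mod_self_left, Nat.mod_eq_of_lt (by omega)]
    rw [Finset.sum_congr rfl (fun i (_ : i ∈ Finset.range (p - A)) => Δp_eq_sum p hp2 m (r-A) (w - i) (by omega))]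
    rw [hd, hmod]
    by_cases hβ0 : r % (p-1) = 0
    · -- LHS is directly at level m - r/(p-1)
      rw [show m - α₁ - 1 = m - r / (p-1) from by omega]
      rw [Finset.sum_congr rfl (fun i (_ : i ∈ Finset.range p) => show Δp p m r (w - (i:ℤ))
        = ∑ j ∈ Finset.range 1, pnomialGT p (m - r/(p-1)) (w - i - j) from by
          simp only [Δp, if_pos hβ0, Finset.sum_range_one, Nat.cast_zero, sub_zero])]
      rw [show p - ((p-1) + r % (p-1) - A) = A + 1 from by omega]
      exact rect_le' _ (pnomialGT_nonneg p _) w p 1 (p - A) (A + 1)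
        (by omega) (by omega) (by omega) (by omega) (by omega) (by omega) (by omega)
    · -- β ≠ 0 : expand RHS one more level
      have hα1' := hα1 hβ0
      rw [hα₁] at hα1'
      obtain ⟨L, hLdef⟩ : ∃ L, L = m - (α₁ + 1) - 1 := ⟨_, rfl⟩
      rw [show p - ((p-1) + r % (p-1) - A) = A + 1 - r % (p-1) from by omega]
      rw [show m - α₁ - 1 = L + 1 from by omega]
      rw [Finset.sum_congr rfl (fun i (_ : i ∈ Finset.range (p - A)) => Finset.sum_congr rfl
        (fun j (_ : j ∈ Finset.range (A + 1 - r % (p-1))) =>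
        pnomialGT_succ p (by omega) L (w - i - j)))]
      rw [Finset.sum_congr rfl (fun i (_ : i ∈ Finset.range p) => Δp_eq_sum p hp2 m r (w - (i:ℤ)) (by omega))]
      rw [show m - r / (p-1) - 1 = L from by omega]
      -- LHS : ∑ i<p, ∑ j<p-β, g (w-i-j) ; RHS : ∑ i<p-A, ∑ j<A+1-β, ∑ k<p, g (w-i-j-k)
      have hswap : ∑ i ∈ Finset.range (p - A), ∑ j ∈ Finset.range (A + 1 - r % (p-1)),
            ∑ k ∈ Finset.range p, pnomialGT p L (w - i - j - k)
          = ∑ k ∈ Finset.range p, ∑ i ∈ Finset.range (p - A),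
            ∑ j ∈ Finset.range (A + 1 - r % (p-1)),
            pnomialGT p L (w - k - i - j) := by
        rw [Finset.sum_congr rfl (fun i (_ : i ∈ Finset.range (p - A)) =>
          Finset.sum_comm (s := Finset.range (A + 1 - r % (p-1)))
            (t := Finset.range p)
            (f := fun j k => pnomialGT p L (w - i - j - k)))]
        rw [Finset.sum_comm]
        apply Finset.sum_congr rfl
        intro k _
        apply Finset.sum_congr rfl
        intro i _
        apply Finset.sum_congr rfl
        intro j _
        congr 1
        ring
      rw [hswap]
      rw [Finset.sum_congr rfl (fun k (_ : k ∈ Finset.range p) => Finset.sum_congr rfl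
        (fun i (_ : i ∈ Finset.range (p - r % (p-1))) =>
        show pnomialGT p L (w - (k:ℤ) - i)
          = ∑ j ∈ Finset.range 1, pnomialGT p L (w - k - i - j) from by
            simp only [Finset.sum_range_one, Nat.cast_zero, sub_zero]))]
      apply Finset.sum_le_sum
      intro k _
      exact rect_le' _ (pnomialGT_nonneg p _) (w - k)
        (p - r % (p-1)) 1 (p - A) (A + 1 - r % (p-1))
        (by omega) (by omega) (by omega) (by omega) (by omega) (by omega) (by omega)
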